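/- Let μ be a finite Borel measure on ℂ^n whose support K = supp(μ) is compact and has the property that for every z ∈ K there exists ρ(z) > 0 such that for all 0 < r ≤ ρ(z) the compact set K ∩ B̄(z,r) is regular. Suppose μ satisfies the mass density condition: there exist r₀ > 0 and T > 0 such that μ(B(z,r)) ≥ r^T for all z ∈ K and all 0 < r < r₀. Then μ is a strong Bernstein–Markov measure for K, i.e., for every continuous function Q : K → ℝ the triple (K, μ, Q) satisfies the weighted Bernstein–Markov property. -/

import Mathlib

set_option maxHeartbeats 1000000
open MeasureTheory

variable {n : ℕ}

section auxlemmas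

lemma auxBM_eval_line_diff (p : MvPolynomial (Fin n) ℂ) (a b : Fin n → ℂ) :
    Differentiable ℂ (fun t : ℂ => MvPolynomial.eval (fun i => a i + t * b i) p) := by
  induction p using MvPolynomial.induction_on with
  | C c => simpa using differentiable_const _
  | add q r hq hr => simp only [MvPolynomial.eval_add]; exact hq.add hr
  | mul_X q i hq =>
      simp only [MvPolynomial.eval_mul, MvPolynomial.eval_X]; exact hq.mul ((differentiable_const _).add
        (differentiable_id.mul (differentiable_const _)))

lemma auxBM_eval_cont (p : MvPolynomial (Fin n) ℂ) :
    Continuous (fun z : EuclideanSpace ℂ (Fin n) => MvPolynomial.eval (fun i => z i) p) := by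
  induction p using MvPolynomial.induction_on with
  | C c => simpa using continuous_const
  | add q r hq hr => simp only [MvPolynomial.eval_add]; exact hq.add hr
  | mul_X q i hq =>
      simp only [MvPolynomial.eval_mul, MvPolynomial.eval_X]; exact hq.mul (EuclideanSpace.proj i).continuous

lemma auxBM_eval_const_of_totalDegree_eq_zero (p : MvPolynomial (Fin n) ℂ)
    (h : p.totalDegree = 0) (f g : Fin n → ℂ) :
    MvPolynomial.eval f p = MvPolynomial.eval g p := by
  rw [MvPolynomial.eval_eq, MvPolynomial.eval_eq]
  apply Finset.sum_congr rfl
  intro m hm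
  have hz := (MvPolynomial.totalDegree_eq_zero_iff (Fin n) p).mp h m hm
  simp [hz]

lemma auxBM_totalDegree_C_mul (a : ℂ) (ha : a ≠ 0) (p : MvPolynomial (Fin n) ℂ) :
    (MvPolynomial.C a * p).totalDegree = p.totalDegree := by
  have h1 : (MvPolynomial.C a * p).totalDegree ≤ p.totalDegree := by
    simpa using (MvPolynomial.totalDegree_mul (MvPolynomial.C a) p).trans
      (by simp [MvPolynomial.totalDegree_C])
  have h2 : p.totalDegree ≤ (MvPolynomial.C a * p).totalDegree := by
    conv_lhs => rw [show p = MvPolynomial.C a⁻¹ * (MvPolynomial.C a * p) by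
      rw [← mul_assoc, ← MvPolynomial.C_mul, inv_mul_cancel₀ ha, MvPolynomial.C_1, one_mul]]
    simpa using (MvPolynomial.totalDegree_mul (MvPolynomial.C a⁻¹) (MvPolynomial.C a * p)).trans
      (by simp [MvPolynomial.totalDegree_C])
  exact le_antisymm h1 h2

end auxlemmas

/-- The defining family for the extremal function of `E ⊆ ℂ^n`. -/
def extremalSet (E : Set (EuclideanSpace ℂ (Fin n))) (z : EuclideanSpace ℂ (Fin n)) :
    Set ℝ :=
  {v | ∃ p : MvPolynomial (Fin n) ℂ, 0 < p.totalDegree ∧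
    (∀ w ∈ E, ‖MvPolynomial.eval (fun i => w i) p‖ ≤ 1) ∧
    v = (p.totalDegree : ℝ)⁻¹ * Real.log ‖MvPolynomial.eval (fun i => z i) p‖}

/-- The extremal function `V_E(z) = sup { (1/deg p) log |p(z)| }`. -/
noncomputable def extremalFunction (E : Set (EuclideanSpace ℂ (Fin n)))
    (z : EuclideanSpace ℂ (Fin n)) : ℝ :=
  sSup (extremalSet E z)

/-- A compact set `E ⊆ ℂ^n` is regular if its extremal function `V_E` is finite-valued
and continuous on `ℂ^n`. -/
def RegularSet (E : Set (EuclideanSpace ℂ (Fin n))) : Prop :=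
  (∀ z, BddAbove (extremalSet E z)) ∧ Continuous (extremalFunction E)

section extralemmas

lemma auxBM_extremal_nonpos {E : Set (EuclideanSpace ℂ (Fin n))}
    {z : EuclideanSpace ℂ (Fin n)} (hz : z ∈ E) : extremalFunction E z ≤ 0 := by
  apply Real.sSup_le _ le_rfl
  rintro v ⟨p, hd, hp, rfl⟩
  have h1 : Real.log ‖MvPolynomial.eval (fun i => z i) p‖ ≤ 0 :=
    Real.log_nonpos (norm_nonneg _) (hp z hz)
  have h2 : (0:ℝ) ≤ (p.totalDegree : ℝ)⁻¹ := by positivity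
  exact mul_nonpos_of_nonneg_of_nonpos h2 h1

/-- Bernstein–Walsh inequality, definitionally. -/
lemma auxBM_bernstein_walsh {E : Set (EuclideanSpace ℂ (Fin n))}
    (hbdd : ∀ z, BddAbove (extremalSet E z)) {p : MvPolynomial (Fin n) ℂ}
    (hd : 0 < p.totalDegree) {M : ℝ} (hM : 0 < M)
    (hE : ∀ w ∈ E, ‖MvPolynomial.eval (fun i => w i) p‖ ≤ M)
    (z : EuclideanSpace ℂ (Fin n)) :
    ‖MvPolynomial.eval (fun i => z i) p‖ ≤
      M * Real.exp ((p.totalDegree : ℝ) * extremalFunction E z) := by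
  set q : MvPolynomial (Fin n) ℂ := MvPolynomial.C ((M:ℂ)⁻¹) * p with hq
  have hMne : (M:ℂ) ≠ 0 := by exact_mod_cast hM.ne'
  have hnorm : ∀ w : EuclideanSpace ℂ (Fin n),
      ‖MvPolynomial.eval (fun i => w i) q‖ =
        M⁻¹ * ‖MvPolynomial.eval (fun i => w i) p‖ := by
    intro w
    simp [hq, norm_mul, norm_inv, Complex.norm_real, abs_of_pos hM]
  have hdq : q.totalDegree = p.totalDegree := by
    apply auxBM_totalDegree_C_mul
    exact inv_ne_zero hMne
  by_cases h0 : MvPolynomial.eval (fun i => z i) p = 0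
  · rw [h0]
    simp
    positivity
  · have hpos : 0 < ‖MvPolynomial.eval (fun i => z i) p‖ := norm_pos_iff.mpr h0
    have hmem : ((p.totalDegree : ℝ))⁻¹ * Real.log ‖MvPolynomial.eval (fun i => z i) q‖ ∈
        extremalSet E z := by
      refine ⟨q, by rw [hdq]; exact hd, ?_, by rw [hdq]⟩
      intro w hw
      rw [hnorm w]
      rw [inv_mul_le_iff₀ hM, mul_one]
      exact hE w hw
    have hle : ((p.totalDegree : ℝ))⁻¹ * Real.log ‖MvPolynomial.eval (fun i => z i) q‖ ≤
        extremalFunction E z := le_csSup (hbdd z) hmem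
    have hdpos : (0:ℝ) < (p.totalDegree : ℝ) := by exact_mod_cast hd
    have hlog : Real.log ‖MvPolynomial.eval (fun i => z i) q‖ ≤
        (p.totalDegree : ℝ) * extremalFunction E z := by
      rw [inv_mul_le_iff₀ hdpos] at hle
      linarith [hle]
    have hqpos : 0 < ‖MvPolynomial.eval (fun i => z i) q‖ := by
      rw [hnorm]; positivity
    have := Real.exp_log hqpos ▸ Real.exp_le_exp.mpr hlog
    rw [hnorm z] at this
    calc ‖MvPolynomial.eval (fun i => z i) p‖
        = M * (M⁻¹ * ‖MvPolynomial.eval (fun i => z i) p‖) := by field_simp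
      _ ≤ M * Real.exp ((p.totalDegree : ℝ) * extremalFunction E z) := by
          apply mul_le_mul_of_nonneg_left this hM.le

end extralemmas

variable [MeasurableSpace (EuclideanSpace ℂ (Fin n))]
  [BorelSpace (EuclideanSpace ℂ (Fin n))]

/-- `(K, ν, Q)` satisfies the weighted Bernstein–Markov property (with `w = e^{-Q}`). -/
def WeightedBernsteinMarkov (K : Set (EuclideanSpace ℂ (Fin n)))
    (ν : Measure (EuclideanSpace ℂ (Fin n))) (Q : EuclideanSpace ℂ (Fin n) → ℝ) : Prop :=
  ∀ ε : ℝ, 0 < ε → ∃ C : ℝ, 0 < C ∧ ∀ k : ℕ, 1 ≤ k → ∀ p : MvPolynomial (Fin n) ℂ,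
    p.totalDegree ≤ k → ∀ z ∈ K,
      ‖MvPolynomial.eval (fun i => z i) p‖ * Real.exp (-Q z) ^ k ≤ C * (1 + ε) ^ k *
        Real.sqrt (∫ w in K, ‖MvPolynomial.eval (fun i => w i) p‖ ^ 2 *
          Real.exp (-Q w) ^ (2 * k) ∂ν)

/-- Let `μ` be a finite measure whose support `K` is compact and such that every small
closed-ball slice `K ∩ B̄(z,r)` is regular.  If `μ` satisfies the mass density condition
`μ(B(z,r)) ≥ r^T` for `z ∈ K`, `0 < r < r₀`, then `μ` is a strong Bernstein–Markov
measure for `K`: for every continuous `Q : K → ℝ` the triple `(K, μ, Q)` satisfies the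
weighted Bernstein–Markov property. -/
theorem mass_density_implies_strong_bernstein_markov
    (μ : Measure (EuclideanSpace ℂ (Fin n))) [IsFiniteMeasure μ]
    (K : Set (EuclideanSpace ℂ (Fin n)))
    (hsupp : ∀ z, z ∈ K ↔ ∀ r : ℝ, 0 < r → 0 < μ (Metric.ball z r))
    (hKc : IsCompact K)
    (hloc : ∀ z ∈ K, ∃ ρ : ℝ, 0 < ρ ∧ ∀ r : ℝ, 0 < r → r ≤ ρ →
      RegularSet (K ∩ Metric.closedBall z r))
    (r₀ T : ℝ) (hr₀ : 0 < r₀) (hT : 0 < T)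
    (hmass : ∀ z ∈ K, ∀ r : ℝ, 0 < r → r < r₀ →
      ENNReal.ofReal (r ^ T) ≤ μ (Metric.ball z r)) :
    ∀ Q : EuclideanSpace ℂ (Fin n) → ℝ, ContinuousOn Q K →
      WeightedBernsteinMarkov K μ Q := by
  intro Q hQ ε hε
  rcases K.eq_empty_or_nonempty with hKe | ⟨z₀, hz₀⟩
  · exact ⟨1, one_pos, fun k hk p hp z hz => by
      rw [hKe] at hz; exact absurd hz (Set.notMem_empty z)⟩
  -- the basic small parameter
  set η : ℝ := Real.log (1 + ε) / (1 + T) with hηdef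
  have hη : 0 < η := div_pos (Real.log_pos (by linarith)) (by linarith)
  have hηT : η * (1 + T) = Real.log (1 + ε) := div_mul_cancel₀ _ (by positivity)
  -- uniform continuity modulus of Q on K
  obtain ⟨δ₀, hδ₀, hQδ⟩ : ∃ δ : ℝ, 0 < δ ∧ ∀ x ∈ K, ∀ y ∈ K, dist x y < δ → |Q x - Q y| < η := by
    have h := (Metric.uniformContinuousOn_iff).mp (hKc.uniformContinuousOn_of_continuous hQ) η hη
    obtain ⟨δ, hδ, h⟩ := h
    exact ⟨δ, hδ, fun x hx y hy hd => by simpa [Real.dist_eq] using h x hx y hy hd⟩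
  set c₀ : ℝ := min δ₀ r₀ / 4 with hc₀def
  have hc₀ : 0 < c₀ := by
    have := lt_min hδ₀ hr₀
    positivity
  -- per-point slice data
  have hchoice : ∀ z : EuclideanSpace ℂ (Fin n), ∃ sR : ℝ × ℝ, 0 < sR.1 ∧ 0 < sR.2 ∧ (z ∈ K →
      sR.1 ≤ c₀ ∧ (∀ w, BddAbove (extremalSet (K ∩ Metric.closedBall z sR.1) w)) ∧
      ∀ y ∈ K ∩ Metric.closedBall z sR.1, ∀ w, dist w y ≤ sR.2 →
        extremalFunction (K ∩ Metric.closedBall z sR.1) w ≤ η) := by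
    intro z
    by_cases hzK : z ∈ K
    · obtain ⟨ρ, hρ, hreg⟩ := hloc z hzK
      have hs' : 0 < min ρ c₀ := lt_min hρ hc₀
      have hregs := hreg (min ρ c₀) hs' (min_le_left _ _)
      have hVcont : Continuous (extremalFunction (K ∩ Metric.closedBall z (min ρ c₀))) :=
        hregs.2
      have hDco : IsCompact (Metric.closedBall z (min ρ c₀ + 1)) := isCompact_closedBall _ _
      obtain ⟨δ, hδ, hδP⟩ := (Metric.uniformContinuousOn_iff).mp
        (hDco.uniformContinuousOn_of_continuous hVcont.continuousOn) η hη
      refine ⟨(min ρ c₀, min δ 1 / 2), hs', by positivity,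
        fun _ => ⟨min_le_right _ _, hregs.1, ?_⟩⟩
      rintro y ⟨hyK, hyb⟩ w hw
      have hyb' : dist y z ≤ min ρ c₀ := Metric.mem_closedBall.mp hyb
      have hyD : y ∈ Metric.closedBall z (min ρ c₀ + 1) :=
        Metric.mem_closedBall.mpr (by linarith)
      have hwD : w ∈ Metric.closedBall z (min ρ c₀ + 1) := by
        apply Metric.mem_closedBall.mpr
        have h1 := dist_triangle w y z
        have h2 : min δ 1 / 2 ≤ 1 / 2 := by
          have := min_le_right δ 1
          linarith
        linarith
      have hlt : dist w y < δ := by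
        have h2 : min δ 1 / 2 ≤ δ / 2 := by
          have := min_le_left δ 1
          linarith
        linarith
      have h3 := hδP w hwD y hyD hlt
      rw [Real.dist_eq] at h3
      have h4 := abs_lt.mp h3
      have h5 : extremalFunction (K ∩ Metric.closedBall z (min ρ c₀)) y ≤ 0 :=
        auxBM_extremal_nonpos ⟨hyK, hyb⟩
      linarith [h4.2]
    · exact ⟨(c₀, 1), hc₀, one_pos, fun h => absurd h hzK⟩
  choose sR hs1 hs2 hsP using hchoice
  -- finite subcover
  have hcov : K ⊆ ⋃ z ∈ K, Metric.ball z ((sR z).1 / 2) := by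
    intro z hz
    exact Set.mem_biUnion hz (Metric.mem_ball_self (by have := hs1 z; positivity))
  obtain ⟨t, htK, htfin, htcov⟩ :=
    hKc.elim_finite_subcover_image (fun z _ => Metric.isOpen_ball) hcov
  have htne : (htfin.toFinset).Nonempty := by
    obtain ⟨i, hit, -⟩ := Set.mem_iUnion₂.mp (htcov hz₀)
    exact ⟨i, htfin.mem_toFinset.mpr hit⟩
  set β : ℝ := min ((htfin.toFinset.inf' htne fun z => (sR z).2) / 6) c₀ with hβdef
  have hβ : 0 < β := by
    apply lt_min _ hc₀
    have h6 : 0 < (htfin.toFinset.inf' htne fun z => (sR z).2) :=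
      (Finset.lt_inf'_iff htne).mpr fun i hi => hs2 i
    linarith
  have hsqβ : 0 < Real.sqrt (β ^ T) := Real.sqrt_pos.mpr (Real.rpow_pos_of_pos hβ T)
  refine ⟨2 / Real.sqrt (β ^ T), by positivity, ?_⟩
  intro k hk p hdk z hz
  -- the weighted sup is attained
  have hFcont : ContinuousOn
      (fun u : EuclideanSpace ℂ (Fin n) => ‖MvPolynomial.eval (fun i => u i) p‖ *
        Real.exp (-Q u) ^ k) K := by
    apply ContinuousOn.mul ((auxBM_eval_cont p).norm.continuousOn)
    exact (Real.continuous_exp.comp_continuousOn hQ.neg).pow k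
  obtain ⟨zs, hzs, hmax'⟩ := hKc.exists_isMaxOn ⟨z₀, hz₀⟩ hFcont
  have hmax := isMaxOn_iff.mp hmax'
  set N : ℝ := ‖MvPolynomial.eval (fun i => zs i) p‖ with hNdef
  have hRHS0 : (0:ℝ) ≤ 2 / Real.sqrt (β ^ T) * (1 + ε) ^ k *
      Real.sqrt (∫ w in K, ‖MvPolynomial.eval (fun i => w i) p‖ ^ 2 *
        Real.exp (-Q w) ^ (2 * k) ∂μ) :=
    mul_nonneg (mul_nonneg (by positivity) (by positivity)) (Real.sqrt_nonneg _)
  by_cases hN : N ≤ 0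
  · have h1 := hmax z hz
    have h2 : ‖MvPolynomial.eval (fun i => z i) p‖ * Real.exp (-Q z) ^ k ≤ 0 := by
      have : N * Real.exp (-Q zs) ^ k ≤ 0 :=
        mul_nonpos_of_nonpos_of_nonneg hN (by positivity)
      linarith
    linarith
  push_neg at hN
  set rk : ℝ := β * Real.exp (-(2 * (k:ℝ)) * η) with hrkdef
  have hrk : 0 < rk := by positivity
  have hexple1 : Real.exp (-(2 * (k:ℝ)) * η) ≤ 1 := Real.exp_le_one_iff.mpr (by
    have : (0:ℝ) ≤ 2 * (k:ℝ) := by positivity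
    nlinarith)
  have hrkβ : rk ≤ β := by
    nlinarith
  have hrkr₀ : rk < r₀ := by
    have h1 : c₀ < r₀ := by
      have := min_le_right δ₀ r₀
      simp only [hc₀def]
      linarith
    have := min_le_right ((htfin.toFinset.inf' htne fun z => (sR z).2) / 6) c₀
    linarith
  have hrkδ₀ : rk < δ₀ := by
    have h1 : c₀ ≤ δ₀ / 4 := by
      simp only [hc₀def]
      have := min_le_left δ₀ r₀
      linarith
    have := min_le_right ((htfin.toFinset.inf' htne fun z => (sR z).2) / 6) c₀
    linarith
  -- KEY: lower bound for |p| on a small ball around the peak point zs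
  have hKEY : ∀ u ∈ K, dist u zs < rk → N / 2 ≤ ‖MvPolynomial.eval (fun i => u i) p‖ := by
    intro u hu hud
    by_cases hd0 : p.totalDegree = 0
    · have hcst := auxBM_eval_const_of_totalDegree_eq_zero p hd0 (fun i => u i) (fun i => zs i)
      rw [hcst]
      linarith
    have hd : 0 < p.totalDegree := Nat.pos_of_ne_zero hd0
    obtain ⟨i, hit, hzsi⟩ := Set.mem_iUnion₂.mp (htcov hzs)
    have hiK : i ∈ K := htK hit
    obtain ⟨hsc₀, hbdd, hVb⟩ := hsP i hiK
    have hzsi' : dist zs i < (sR i).1 / 2 := Metric.mem_ball.mp hzsi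
    have hzsE : zs ∈ K ∩ Metric.closedBall i (sR i).1 :=
      ⟨hzs, Metric.mem_closedBall.mpr (by linarith [hs1 i])⟩
    -- sup bound on the slice
    have hEb : ∀ y ∈ K ∩ Metric.closedBall i (sR i).1,
        ‖MvPolynomial.eval (fun j => y j) p‖ ≤ N * Real.exp ((k:ℝ) * η) := by
      rintro y ⟨hyK, hyb⟩
      have hdy : dist y zs < δ₀ := by
        have h1 : dist y i ≤ (sR i).1 := Metric.mem_closedBall.mp hyb
        have h2 := dist_triangle y i zs
        have h3 : dist i zs = dist zs i := dist_comm i zs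
        have h4 : c₀ ≤ δ₀ / 4 := by
          rw [hc₀def]
          have := min_le_left δ₀ r₀
          linarith
        linarith [hs1 i]
      have hQy := abs_lt.mp (hQδ y hyK zs hzs hdy)
      have hmy := hmax y hyK
      calc ‖MvPolynomial.eval (fun j => y j) p‖
          = (‖MvPolynomial.eval (fun j => y j) p‖ * Real.exp (-Q y) ^ k) *
              Real.exp (Q y) ^ k := by
            rw [mul_assoc, ← mul_pow, ← Real.exp_add]
            simp
        _ ≤ (N * Real.exp (-Q zs) ^ k) * Real.exp (Q y) ^ k :=
            mul_le_mul_of_nonneg_right hmy (by positivity)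
        _ = N * (Real.exp (-Q zs) * Real.exp (Q y)) ^ k := by rw [mul_pow, mul_assoc]
        _ = N * Real.exp (Q y - Q zs) ^ k := by rw [← Real.exp_add]; ring_nf
        _ ≤ N * Real.exp ((k:ℝ) * η) := by
            rw [← Real.exp_nat_mul]
            apply mul_le_mul_of_nonneg_left _ (norm_nonneg _)
            apply Real.exp_le_exp.mpr
            have hk0 : (0:ℝ) ≤ (k:ℝ) := by positivity
            nlinarith [hQy.2]
    have hNexp : (0:ℝ) < N * Real.exp ((k:ℝ) * η) := by positivity
    set B : ℝ := N * Real.exp ((k:ℝ) * η) * Real.exp ((k:ℝ) * η) with hBdef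
    have hB : 0 < B := by positivity
    -- Bernstein–Walsh bound on a neighborhood of the peak point
    have hBW : ∀ w : EuclideanSpace ℂ (Fin n), dist w zs ≤ (sR i).2 →
        ‖MvPolynomial.eval (fun j => w j) p‖ ≤ B := by
      intro w hw
      have hV : extremalFunction (K ∩ Metric.closedBall i (sR i).1) w ≤ η :=
        hVb zs hzsE w hw
      have h1 := auxBM_bernstein_walsh hbdd hd hNexp hEb w
      have h2 : Real.exp ((p.totalDegree : ℝ) *
          extremalFunction (K ∩ Metric.closedBall i (sR i).1) w) ≤ Real.exp ((k:ℝ) * η) := by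
        apply Real.exp_le_exp.mpr
        have hdk' : (p.totalDegree : ℝ) ≤ (k:ℝ) := by exact_mod_cast hdk
        have hdnn : (0:ℝ) ≤ (p.totalDegree:ℝ) := by positivity
        nlinarith
      exact le_trans h1 (mul_le_mul_of_nonneg_left h2 hNexp.le)
    by_cases huz : u = zs
    · rw [huz]; linarith
    have hvpos : 0 < dist u zs := dist_pos.mpr huz
    set g : ℂ → ℂ := fun t => MvPolynomial.eval (fun j => zs j + t * (u j - zs j)) p with hgdef
    have hgd : Differentiable ℂ g := auxBM_eval_line_diff p _ _
    set R1 : ℝ := (sR i).2 / dist u zs with hR1def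
    have hR1 : 0 < R1 := div_pos (hs2 i) hvpos
    have hgb : ∀ t : ℂ, t ∈ Metric.ball (0:ℂ) R1 → ‖g t‖ ≤ B := by
      intro t ht
      have htn : ‖t‖ < R1 := by simpa using Metric.mem_ball.mp ht
      set w : EuclideanSpace ℂ (Fin n) := zs + t • (u - zs) with hwdef
      have hwc : (fun j => zs j + t * (u j - zs j)) = (fun j => w j) := by
        funext j
        simp [hwdef]
      have hwd : dist w zs ≤ (sR i).2 := by
        have he : dist w zs = ‖t‖ * dist u zs := by
          rw [dist_eq_norm, hwdef, add_sub_cancel_left, norm_smul, dist_eq_norm]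
        rw [he]
        calc ‖t‖ * dist u zs ≤ R1 * dist u zs :=
              mul_le_mul_of_nonneg_right htn.le hvpos.le
          _ = (sR i).2 := div_mul_cancel₀ _ hvpos.ne'
      have hgt : g t = MvPolynomial.eval (fun j => w j) p := by rw [hgdef]; simp only [hwc]
      rw [hgt]
      exact hBW w hwd
    have hgmaps : Set.MapsTo g (Metric.ball (0:ℂ) R1) (Metric.ball (g 0) (3 * B)) := by
      intro t ht
      have h1 := hgb t ht
      have h0 : ‖g 0‖ ≤ B := hgb 0 (Metric.mem_ball_self hR1)
      rw [Metric.mem_ball]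
      calc dist (g t) (g 0) ≤ ‖g t‖ + ‖g 0‖ := dist_le_norm_add_norm _ _
        _ < 3 * B := by linarith
    have hβRg : β ≤ (sR i).2 / 6 := by
      apply le_trans (min_le_left _ _)
      have := Finset.inf'_le (fun z => (sR z).2) (htfin.mem_toFinset.mpr hit)
      linarith
    have hduz2 : dist u zs < (sR i).2 := by
      have h1 : rk ≤ (sR i).2 / 6 := by
        rw [hrkdef]
        nlinarith [Real.exp_pos (-(2 * (k:ℝ)) * η)]
      have := hs2 i
      linarith
    have h1mem : (1:ℂ) ∈ Metric.ball (0:ℂ) R1 := by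
      rw [Metric.mem_ball]
      simp only [dist_zero_right, norm_one]
      rw [hR1def, lt_div_iff₀ hvpos, one_mul]
      exact hduz2
    have hSch := Complex.dist_le_div_mul_dist_of_mapsTo_ball hgd.differentiableOn (hgmaps.mono_right Metric.ball_subset_closedBall) h1mem
    have hfun1 : (fun j => zs j + (1:ℂ) * (u j - zs j)) = (fun j => u j) := by
      funext j; ring
    have hfun0 : (fun j => zs j + (0:ℂ) * (u j - zs j)) = (fun j => zs j) := by
      funext j; ring
    have hg1 : g 1 = MvPolynomial.eval (fun j => u j) p := by
      calc g 1 = MvPolynomial.eval (fun j => zs j + (1:ℂ) * (u j - zs j)) p := rfl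
        _ = MvPolynomial.eval (fun j => u j) p := by rw [hfun1]
    have hg0 : g 0 = MvPolynomial.eval (fun j => zs j) p := by
      calc g 0 = MvPolynomial.eval (fun j => zs j + (0:ℂ) * (u j - zs j)) p := rfl
        _ = MvPolynomial.eval (fun j => zs j) p := by rw [hfun0]
    have hd10 : dist (1:ℂ) 0 = 1 := by simp
    have hBexp : B * Real.exp (-(2 * (k:ℝ)) * η) = N := by
      rw [hBdef, mul_assoc, mul_assoc, ← Real.exp_add, ← Real.exp_add]
      have he : (k:ℝ) * η + ((k:ℝ) * η + -(2 * (k:ℝ)) * η) = 0 := by ring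
      rw [he, Real.exp_zero, mul_one]
    have h5 : 3 * B / R1 * dist (1:ℂ) 0 ≤ N / 2 := by
      rw [hd10, mul_one, hR1def, div_div_eq_mul_div]
      rw [div_le_iff₀ (hs2 i)]
      have h7 : dist u zs ≤ ((sR i).2 / 6) * Real.exp (-(2 * (k:ℝ)) * η) := by
        have h8 : rk ≤ ((sR i).2 / 6) * Real.exp (-(2 * (k:ℝ)) * η) := by
          rw [hrkdef]
          exact mul_le_mul_of_nonneg_right hβRg (Real.exp_pos _).le
        linarith
      nlinarith [hB.le, hs2 i, Real.exp_pos (-(2 * (k:ℝ)) * η), hBexp]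
    have h6 : dist (MvPolynomial.eval (fun j => u j) p)
        (MvPolynomial.eval (fun j => zs j) p) ≤ N / 2 := by
      rw [← hg1, ← hg0]
      exact le_trans hSch h5
    have h7 : N - ‖MvPolynomial.eval (fun j => u j) p‖ ≤ N / 2 := by
      have h8 : N - ‖MvPolynomial.eval (fun j => u j) p‖ ≤
          ‖MvPolynomial.eval (fun j => zs j) p - MvPolynomial.eval (fun j => u j) p‖ := by
        have := norm_sub_norm_le (MvPolynomial.eval (fun j => zs j) p)
          (MvPolynomial.eval (fun j => u j) p)
        rw [hNdef]
        linarith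
      rw [← dist_eq_norm, dist_comm] at h8
      linarith
    linarith
  -- Q remains close on the small ball
  have hKEY2 : ∀ u ∈ K, dist u zs < rk → Q u ≤ Q zs + η := by
    intro u hu hud
    have h1 := hQδ u hu zs hzs (lt_trans hud hrkδ₀)
    have h2 := abs_lt.mp h1
    linarith [h2.2]
  -- measure bound
  have hμcompl : μ Kᶜ = 0 := by
    apply measure_null_of_locally_null
    intro x hx
    have hxK : x ∉ K := hx
    rw [hsupp] at hxK
    push_neg at hxK
    obtain ⟨r, hr, hr0⟩ := hxK
    refine ⟨Metric.ball x r, mem_nhdsWithin_of_mem_nhds (Metric.ball_mem_nhds x hr), ?_⟩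
    simpa using hr0
  have hμS : ENNReal.ofReal (rk ^ T) ≤ μ (K ∩ Metric.ball zs rk) := by
    have h1 := hmass zs hzs rk hrk hrkr₀
    have h2 : μ (Metric.ball zs rk) ≤ μ (K ∩ Metric.ball zs rk) := by
      calc μ (Metric.ball zs rk)
          ≤ μ ((K ∩ Metric.ball zs rk) ∪ (Kᶜ ∩ Metric.ball zs rk)) := by
            apply measure_mono
            intro y hy
            by_cases hyK : y ∈ K
            · exact Or.inl ⟨hyK, hy⟩
            · exact Or.inr ⟨hyK, hy⟩
        _ ≤ μ (K ∩ Metric.ball zs rk) + μ (Kᶜ ∩ Metric.ball zs rk) := measure_union_le _ _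
        _ ≤ μ (K ∩ Metric.ball zs rk) + 0 := by
            gcongr
            exact le_trans (measure_mono Set.inter_subset_left) (le_of_eq hμcompl)
        _ = μ (K ∩ Metric.ball zs rk) := by simp
    exact le_trans h1 h2
  have hμSreal : rk ^ T ≤ (μ (K ∩ Metric.ball zs rk)).toReal := by
    have h1 : (ENNReal.ofReal (rk ^ T)).toReal ≤ (μ (K ∩ Metric.ball zs rk)).toReal :=
      ENNReal.toReal_mono (measure_ne_top μ _) hμS
    rwa [ENNReal.toReal_ofReal (le_of_lt (Real.rpow_pos_of_pos hrk T))] at h1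
  -- the integral lower bound
  set A1 : ℝ := (N / 2) * Real.exp (-(k:ℝ) * (Q zs + η) - (k:ℝ) * (η * T)) with hA1def
  have hA1 : 0 < A1 := by positivity
  have hIlow : A1 ^ 2 * β ^ T ≤ ∫ w in K, ‖MvPolynomial.eval (fun i => w i) p‖ ^ 2 *
      Real.exp (-Q w) ^ (2 * k) ∂μ := by
    have hf2c : ContinuousOn (fun w : EuclideanSpace ℂ (Fin n) =>
        ‖MvPolynomial.eval (fun i => w i) p‖ ^ 2 * Real.exp (-Q w) ^ (2 * k)) K :=
      (((auxBM_eval_cont p).norm.pow 2).continuousOn).mul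
        ((Real.continuous_exp.comp_continuousOn hQ.neg).pow (2 * k))
    have hInt : IntegrableOn (fun w : EuclideanSpace ℂ (Fin n) =>
        ‖MvPolynomial.eval (fun i => w i) p‖ ^ 2 * Real.exp (-Q w) ^ (2 * k)) K μ :=
      hf2c.integrableOn_compact hKc
    have hSm : MeasurableSet (K ∩ Metric.ball zs rk) :=
      (hKc.isClosed.measurableSet).inter Metric.isOpen_ball.measurableSet
    have hc1 : ∀ u ∈ K ∩ Metric.ball zs rk,
        (N / 2) ^ 2 * Real.exp (-(Q zs + η)) ^ (2 * k) ≤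
          ‖MvPolynomial.eval (fun i => u i) p‖ ^ 2 * Real.exp (-Q u) ^ (2 * k) := by
      rintro u ⟨huK, hub⟩
      have h1 := hKEY u huK (Metric.mem_ball.mp hub)
      have h2 := hKEY2 u huK (Metric.mem_ball.mp hub)
      have h3 : Real.exp (-(Q zs + η)) ≤ Real.exp (-Q u) := Real.exp_le_exp.mpr (by linarith)
      apply mul_le_mul (pow_le_pow_left₀ (by positivity) h1 2)
        (pow_le_pow_left₀ (Real.exp_pos _).le h3 (2 * k)) (by positivity) (by positivity)
    have h4 := setIntegral_ge_of_const_le hSm (measure_ne_top μ _) hc1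
      (hInt.mono_set Set.inter_subset_left)
    have h5 : ∫ w in K ∩ Metric.ball zs rk, ‖MvPolynomial.eval (fun i => w i) p‖ ^ 2 *
          Real.exp (-Q w) ^ (2 * k) ∂μ ≤
        ∫ w in K, ‖MvPolynomial.eval (fun i => w i) p‖ ^ 2 * Real.exp (-Q w) ^ (2 * k) ∂μ :=
      setIntegral_mono_set hInt (Filter.Eventually.of_forall fun w => by positivity)
        (HasSubset.Subset.eventuallyLE Set.inter_subset_left)
    have hEq : A1 ^ 2 * β ^ T =
        ((N / 2) ^ 2 * Real.exp (-(Q zs + η)) ^ (2 * k)) * rk ^ T := by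
      have e1 : A1 ^ 2 = (N / 2) ^ 2 *
          Real.exp (2 * (-(k:ℝ) * (Q zs + η) - (k:ℝ) * (η * T))) := by
        rw [hA1def, mul_pow, ← Real.exp_nat_mul]
        norm_num
      have e2 : rk ^ T = β ^ T * Real.exp (-(2 * (k:ℝ)) * η * T) := by
        rw [hrkdef, Real.mul_rpow hβ.le (Real.exp_pos _).le, ← Real.exp_mul]
      have e3 : Real.exp (-(Q zs + η)) ^ (2 * k) =
          Real.exp (2 * (k:ℝ) * (-(Q zs + η))) := by
        rw [← Real.exp_nat_mul]
        congr 1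
        push_cast
        ring
      rw [e1, e2, e3]
      rw [show (2 : ℝ) * (-(k:ℝ) * (Q zs + η) - (k:ℝ) * (η * T)) =
        2 * (k:ℝ) * (-(Q zs + η)) + -(2 * (k:ℝ)) * η * T by ring]
      rw [Real.exp_add]
      ring
    have h6 : A1 ^ 2 * β ^ T ≤
        ((N / 2) ^ 2 * Real.exp (-(Q zs + η)) ^ (2 * k)) *
          (μ (K ∩ Metric.ball zs rk)).toReal := by
      rw [hEq]
      exact mul_le_mul_of_nonneg_left hμSreal (by positivity)
    rw [smul_eq_mul, measureReal_def] at h4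
    linarith
  -- conclusion
  have hsqrt : A1 * Real.sqrt (β ^ T) ≤
      Real.sqrt (∫ w in K, ‖MvPolynomial.eval (fun i => w i) p‖ ^ 2 *
        Real.exp (-Q w) ^ (2 * k) ∂μ) := by
    have h2 := Real.sqrt_le_sqrt hIlow
    rwa [Real.sqrt_mul (sq_nonneg A1), Real.sqrt_sq hA1.le] at h2
  have hfinal : N * Real.exp (-Q zs) ^ k = 2 / Real.sqrt (β ^ T) * (1 + ε) ^ k *
      (A1 * Real.sqrt (β ^ T)) := by
    have hpow : (1 + ε) ^ k = Real.exp ((k:ℝ) * (η * (1 + T))) := by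
      rw [hηT, Real.exp_nat_mul, Real.exp_log (by linarith)]
    have hexp : Real.exp ((k:ℝ) * (η * (1 + T))) *
        Real.exp (-(k:ℝ) * (Q zs + η) - (k:ℝ) * (η * T)) = Real.exp ((k:ℝ) * -Q zs) := by
      rw [← Real.exp_add]
      congr 1
      ring
    rw [hpow, hA1def, ← Real.exp_nat_mul, ← hexp]
    have hsne : Real.sqrt (β ^ T) ≠ 0 := hsqβ.ne'
    field_simp
  calc ‖MvPolynomial.eval (fun i => z i) p‖ * Real.exp (-Q z) ^ k
      ≤ N * Real.exp (-Q zs) ^ k := hmax z hz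
    _ = 2 / Real.sqrt (β ^ T) * (1 + ε) ^ k * (A1 * Real.sqrt (β ^ T)) := hfinal
    _ ≤ 2 / Real.sqrt (β ^ T) * (1 + ε) ^ k *
        Real.sqrt (∫ w in K, ‖MvPolynomial.eval (fun i => w i) p‖ ^ 2 *
          Real.exp (-Q w) ^ (2 * k) ∂μ) := by
        apply mul_le_mul_of_nonneg_left hsqrt (by positivity)
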